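/- arXiv:0904.2918 — 2 statements merged into one kernel-verified Lean document; each statement's English description precedes it below -/
import Mathlib

section
/- Define N_ℓ(a,b,c) ∈ {0,1} as: 1 iff a,b,c ≤ ℓ, a+b+c even, |a-b| ≤ c ≤ a+b, a+b+c ≤ 2ℓ. Let c(x) = x²/2 + x and define Deg_ℓ(λ₁,λ₂,λ₃,λ₄) = (1/(2(ℓ+2)))·[ (∑_{μ=0}^{ℓ} N_ℓ(λ₁,λ₂,μ)N_ℓ(μ,λ₃,λ₄))·∑_{i=1}^4 c(λ_i) − ∑_{μ=0}^{ℓ} c(μ)·( N_ℓ(λ₁,λ₂,μ)N_ℓ(λ₃,λ₄,μ) + N_ℓ(λ₁,λ₃,μ)N_ℓ(λ₂,λ₄,μ) + N_ℓ(λ₁,λ₄,μ)N_ℓ(λ₂,λ₃,μ) ) ] ∈ ℚ. Suppose λ₁ ≤ λ₂ ≤ λ₃ ≤ λ₄ are nonnegative integers with even sum, ℓ = (λ₁+λ₂+λ₃+λ₄)/2 − 1, and λ₄ ≤ ℓ. Then Deg_ℓ(λ₁,λ₂,λ₃,λ₄) = ℓ + 1 − λ₄ if λ₁+λ₄ ≥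 λ₂+λ₃, and Deg_ℓ(λ₁,λ₂,λ₃,λ₄) = λ₁ if λ₁+λ₄ ≤ λ₂+λ₃. -/
open Finset

/-- The rank of the 3-point level-`ℓ` conformal block for `sl₂`. -/
def slTwoRank (ℓ a b c : ℕ) : ℕ :=
  if a ≤ ℓ ∧ b ≤ ℓ ∧ c ≤ ℓ ∧ Even (a + b + c) ∧
      ((a : ℤ) - (b : ℤ)).natAbs ≤ c ∧ c ≤ a + b ∧ a + b + c ≤ 2 * ℓ
  then 1 else 0

/-- The normalized Casimir eigenvalue `c(x) = x²/2 + x` for `sl₂`. -/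
def casimir (x : ℕ) : ℚ := (x : ℚ) ^ 2 / 2 + (x : ℚ)

/-- The degree on `M̄₀,₄` of the determinant of the level-`ℓ` 4-point
conformal block bundle for `sl₂` with weights `(l₁, l₂, l₃, l₄)`. -/
def degDet (ℓ l₁ l₂ l₃ l₄ : ℕ) : ℚ :=
  (1 / (2 * ((ℓ : ℚ) + 2))) *
    (((∑ μ ∈ Finset.range (ℓ + 1),
        slTwoRank ℓ l₁ l₂ μ * slTwoRank ℓ μ l₃ l₄ : ℕ) : ℚ) *
        (casimir l₁ + casimir l₂ + casimir l₃ + casimir l₄) -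
      ∑ μ ∈ Finset.range (ℓ + 1), casimir μ *
        ((slTwoRank ℓ l₁ l₂ μ * slTwoRank ℓ l₃ l₄ μ +
          slTwoRank ℓ l₁ l₃ μ * slTwoRank ℓ l₂ l₄ μ +
          slTwoRank ℓ l₁ l₄ μ * slTwoRank ℓ l₂ l₃ μ : ℕ) : ℚ))

lemma slTwoRank_rot (ℓ a b c : ℕ) : slTwoRank ℓ a b c = slTwoRank ℓ c a b := by
  simp only [slTwoRank, Nat.even_iff]
  refine if_congr ?_ rfl rfl
  omega

lemma cbRankProd (ℓ a b c d A n μ : ℕ)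
    (ha : a ≤ ℓ) (hb : b ≤ ℓ) (hc : c ≤ ℓ) (hd : d ≤ ℓ)
    (hs : a + b + c + d = 2*ℓ + 2)
    (hA : A = max ((a:ℤ)-b).natAbs ((c:ℤ)-d).natAbs)
    (hn : A + 2*n = min (a+b) (c+d)) :
    slTwoRank ℓ a b μ * slTwoRank ℓ c d μ
      = if A ≤ μ ∧ μ < A + 2*n ∧ (μ - A) % 2 = 0 then 1 else 0 := by
  simp only [slTwoRank, Nat.even_iff]
  split_ifs <;> omega

lemma cbSumInd (ℓ A n : ℕ) (h : A + 2*n ≤ ℓ + 2) (f : ℕ → ℚ) :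
    ∑ μ ∈ range (ℓ+1), f μ * (if A ≤ μ ∧ μ < A + 2*n ∧ (μ - A) % 2 = 0 then (1:ℚ) else 0)
      = ∑ k ∈ range n, f (A + 2*k) := by
  simp_rw [mul_ite, mul_one, mul_zero]
  rw [← Finset.sum_filter]
  have hset : (range (ℓ+1)).filter (fun μ => A ≤ μ ∧ μ < A + 2*n ∧ (μ - A) % 2 = 0)
      = (range n).image (fun k => A + 2*k) := by
    ext μ
    simp only [mem_filter, mem_range, mem_image]
    constructor
    · rintro ⟨h1, h2, h3, h4⟩
      exact ⟨(μ - A)/2, by omega, by omega⟩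
    · rintro ⟨k, hk, rfl⟩
      refine ⟨by omega, by omega, by omega, by omega⟩
  rw [hset, Finset.sum_image (by intro x _ y _ h; simp only at h; omega)]

lemma cbSumCas (A n : ℕ) :
    ∑ k ∈ range n, casimir (A + 2*k)
      = (n:ℚ) * casimir A + ((A:ℚ)+1)*(n:ℚ)*((n:ℚ)-1) + (n:ℚ)*((n:ℚ)-1)*(2*(n:ℚ)-1)/3 := by
  induction n with
  | zero => simp
  | succ m ih =>
    rw [Finset.sum_range_succ, ih]
    simp only [casimir]
    push_cast
    ring

lemma slTwoRank_rot2 (ℓ a b c : ℕ) : slTwoRank ℓ a b c = slTwoRank ℓ b c a := by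
  rw [slTwoRank_rot, slTwoRank_rot]

lemma cbCount (ℓ a b c d A n : ℕ)
    (ha : a ≤ ℓ) (hb : b ≤ ℓ) (hc : c ≤ ℓ) (hd : d ≤ ℓ)
    (hs : a + b + c + d = 2*ℓ + 2)
    (hA : A = max ((a:ℤ)-b).natAbs ((c:ℤ)-d).natAbs)
    (hn : A + 2*n = min (a+b) (c+d)) :
    ((∑ μ ∈ range (ℓ+1), slTwoRank ℓ a b μ * slTwoRank ℓ c d μ : ℕ) : ℚ) = n := by
  have h1 := cbSumInd ℓ A n (by omega) (fun _ => (1:ℚ))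
  push_cast
  rw [Finset.sum_congr rfl (fun μ _ => ?_), h1]
  · simp
  · rw [show ((slTwoRank ℓ a b μ : ℚ)) * (slTwoRank ℓ c d μ)
        = ((slTwoRank ℓ a b μ * slTwoRank ℓ c d μ : ℕ) : ℚ) by push_cast; ring,
      cbRankProd ℓ a b c d A n μ ha hb hc hd hs hA hn]
    simp [apply_ite (Nat.cast : ℕ → ℚ)]

lemma cbEval (ℓ a b c d A n : ℕ)
    (ha : a ≤ ℓ) (hb : b ≤ ℓ) (hc : c ≤ ℓ) (hd : d ≤ ℓ)
    (hs : a + b + c + d = 2*ℓ + 2)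
    (hA : A = max ((a:ℤ)-b).natAbs ((c:ℤ)-d).natAbs)
    (hn : A + 2*n = min (a+b) (c+d)) :
    (∑ μ ∈ range (ℓ+1), casimir μ * ((slTwoRank ℓ a b μ * slTwoRank ℓ c d μ : ℕ) : ℚ))
      = (n:ℚ) * casimir A + ((A:ℚ)+1)*(n:ℚ)*((n:ℚ)-1)
        + (n:ℚ)*((n:ℚ)-1)*(2*(n:ℚ)-1)/3 := by
  rw [← cbSumCas A n, ← cbSumInd ℓ A n (by omega) casimir]
  refine Finset.sum_congr rfl (fun μ _ => ?_)
  rw [cbRankProd ℓ a b c d A n μ ha hb hc hd hs hA hn]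
  simp [apply_ite (Nat.cast : ℕ → ℚ)]

lemma degDet_eval (ℓ l₁ l₂ l₃ l₄ A₁₂ A₁₃ A₁₄ n : ℕ)
    (h1 : l₁ ≤ ℓ) (h2 : l₂ ≤ ℓ) (h3 : l₃ ≤ ℓ) (h4 : l₄ ≤ ℓ)
    (hs : l₁ + l₂ + l₃ + l₄ = 2*ℓ + 2)
    (hA12 : A₁₂ = max ((l₁:ℤ)-l₂).natAbs ((l₃:ℤ)-l₄).natAbs)
    (hn12 : A₁₂ + 2*n = min (l₁+l₂) (l₃+l₄))
    (hA13 : A₁₃ = max ((l₁:ℤ)-l₃).natAbs ((l₂:ℤ)-l₄).natAbs)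
    (hn13 : A₁₃ + 2*n = min (l₁+l₃) (l₂+l₄))
    (hA14 : A₁₄ = max ((l₁:ℤ)-l₄).natAbs ((l₂:ℤ)-l₃).natAbs)
    (hn14 : A₁₄ + 2*n = min (l₁+l₄) (l₂+l₃)) :
    degDet ℓ l₁ l₂ l₃ l₄ = (1 / (2 * ((ℓ : ℚ) + 2))) *
      ((n:ℚ) * (casimir l₁ + casimir l₂ + casimir l₃ + casimir l₄)
        - (((n:ℚ) * casimir A₁₂ + ((A₁₂:ℚ)+1)*(n:ℚ)*((n:ℚ)-1)
            + (n:ℚ)*((n:ℚ)-1)*(2*(n:ℚ)-1)/3)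
          + ((n:ℚ) * casimir A₁₃ + ((A₁₃:ℚ)+1)*(n:ℚ)*((n:ℚ)-1)
            + (n:ℚ)*((n:ℚ)-1)*(2*(n:ℚ)-1)/3)
          + ((n:ℚ) * casimir A₁₄ + ((A₁₄:ℚ)+1)*(n:ℚ)*((n:ℚ)-1)
            + (n:ℚ)*((n:ℚ)-1)*(2*(n:ℚ)-1)/3))) := by
  rw [degDet]
  simp only [show ∀ μ, slTwoRank ℓ μ l₃ l₄ = slTwoRank ℓ l₃ l₄ μ from
    fun μ => slTwoRank_rot2 ℓ μ l₃ l₄]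
  rw [cbCount ℓ l₁ l₂ l₃ l₄ A₁₂ n h1 h2 h3 h4 hs hA12 hn12]
  have hsplit : ∑ μ ∈ Finset.range (ℓ + 1), casimir μ *
        ((slTwoRank ℓ l₁ l₂ μ * slTwoRank ℓ l₃ l₄ μ +
          slTwoRank ℓ l₁ l₃ μ * slTwoRank ℓ l₂ l₄ μ +
          slTwoRank ℓ l₁ l₄ μ * slTwoRank ℓ l₂ l₃ μ : ℕ) : ℚ)
      = (∑ μ ∈ Finset.range (ℓ + 1), casimir μ *
          ((slTwoRank ℓ l₁ l₂ μ * slTwoRank ℓ l₃ l₄ μ : ℕ) : ℚ))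
        + (∑ μ ∈ Finset.range (ℓ + 1), casimir μ *
          ((slTwoRank ℓ l₁ l₃ μ * slTwoRank ℓ l₂ l₄ μ : ℕ) : ℚ))
        + (∑ μ ∈ Finset.range (ℓ + 1), casimir μ *
          ((slTwoRank ℓ l₁ l₄ μ * slTwoRank ℓ l₂ l₃ μ : ℕ) : ℚ)) := by
    rw [← Finset.sum_add_distrib, ← Finset.sum_add_distrib]
    refine Finset.sum_congr rfl (fun μ _ => ?_)
    push_cast
    ring
  rw [hsplit,
    cbEval ℓ l₁ l₂ l₃ l₄ A₁₂ n h1 h2 h3 h4 hs hA12 hn12,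
    cbEval ℓ l₁ l₃ l₂ l₄ A₁₃ n h1 h3 h2 h4 (by omega) hA13 hn13,
    cbEval ℓ l₁ l₄ l₂ l₃ A₁₄ n h1 h4 h2 h3 (by omega) hA14 hn14]

theorem stmt_8 (l₁ l₂ l₃ l₄ ℓ : ℕ)
    (h12 : l₁ ≤ l₂) (h23 : l₂ ≤ l₃) (h34 : l₃ ≤ l₄)
    (hcrit : 2 * (ℓ + 1) = l₁ + l₂ + l₃ + l₄) (h4 : l₄ ≤ ℓ) :
    (l₂ + l₃ ≤ l₁ + l₄ → degDet ℓ l₁ l₂ l₃ l₄ = (ℓ : ℚ) + 1 - (l₄ : ℚ)) ∧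
    (l₁ + l₄ ≤ l₂ + l₃ → degDet ℓ l₁ l₂ l₃ l₄ = (l₁ : ℚ)) := by
  have hℓ : (ℓ:ℚ) = ((l₁:ℚ) + l₂ + l₃ + l₄)/2 - 1 := by
    have : ((2 * (ℓ + 1) : ℕ) : ℚ) = ((l₁ + l₂ + l₃ + l₄ : ℕ) : ℚ) := by rw [hcrit]
    push_cast at this
    linarith
  have hpos : 2 * ((ℓ:ℚ) + 2) ≠ 0 := by positivity
  constructor
  · intro hcase
    rw [degDet_eval ℓ l₁ l₂ l₃ l₄ (l₄-l₃) (l₄-l₂) (l₄-l₁) (ℓ+1-l₄)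
      (by omega) (by omega) (by omega) h4 (by omega)
      (by omega) (by omega) (by omega) (by omega) (by omega) (by omega)]
    simp only [casimir]
    rw [Nat.cast_sub h34, Nat.cast_sub (h23.trans h34), Nat.cast_sub ((h12.trans h23).trans h34),
      Nat.cast_sub (by omega : l₄ ≤ ℓ + 1)]
    push_cast
    rw [hℓ] at hpos ⊢
    rw [one_div, inv_mul_eq_div, div_eq_iff hpos]
    ring
  · intro hcase
    rw [degDet_eval ℓ l₁ l₂ l₃ l₄ (l₂-l₁) (l₃-l₁) (l₄-l₁) l₁
      (by omega) (by omega) (by omega) h4 (by omega)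
      (by omega) (by omega) (by omega) (by omega) (by omega) (by omega)]
    simp only [casimir]
    rw [Nat.cast_sub h12, Nat.cast_sub (h12.trans h23), Nat.cast_sub ((h12.trans h23).trans h34)]
    rw [hℓ] at hpos ⊢
    rw [one_div, inv_mul_eq_div, div_eq_iff hpos]
    ring
end

section
/- Define N_ℓ and Deg_ℓ as follows: N_ℓ(a,b,c) = 1 iff a,b,c ≤ ℓ, a+b+c even, |a-b| ≤ c ≤ a+b, a+b+c ≤ 2ℓ (else 0); c(x) = x²/2 + x; Deg_ℓ(λ₁,λ₂,λ₃,λ₄) = (1/(2(ℓ+2)))·[ (∑_{μ=0}^{ℓ} N_ℓ(λ₁,λ₂,μ)N_ℓ(μ,λ₃,λ₄))·∑_i c(λ_i) − ∑_{μ=0}^{ℓ} c(μ)·( N_ℓ(λ₁,λ₂,μ)N_ℓ(λ₃,λ₄,μ) + N_ℓ(λ₁,λ₃,μ)N_ℓ(λ₂,λ₄,μ) + N_ℓ(λ₁,λ₄,μ)N_ℓ(λ₂,λ₃,μ) ) ]. Suppose λ₁ ≤ λ₂ ≤ λ₃ ≤ λ₄ are nonnegative integers with even sum and λ₄ ≤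 ℓ. Then Deg_ℓ(λ₁,λ₂,λ₃,λ₄) = max{0, (ℓ+1−λ₄)·((λ₁+λ₂+λ₃+λ₄)/2 − ℓ)} if λ₁+λ₄ ≥ λ₂+λ₃, and Deg_ℓ(λ₁,λ₂,λ₃,λ₄) = max{0, (ℓ+1+λ₁−(λ₁+λ₂+λ₃+λ₄)/2)·((λ₁+λ₂+λ₃+λ₄)/2 − ℓ)} if λ₁+λ₄ ≤ λ₂+λ₃. -/
open Finset

set_option linter.all false

def cond3 (ℓ a b μ : ℕ) : Prop :=
  a ≤ ℓ ∧ b ≤ ℓ ∧ μ ≤ ℓ ∧ (a + b + μ) % 2 = 0 ∧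
    ((a : ℤ) - (b : ℤ)).natAbs ≤ μ ∧ μ ≤ a + b ∧ a + b + μ ≤ 2 * ℓ
instance (ℓ a b μ : ℕ) : Decidable (cond3 ℓ a b μ) := by unfold cond3; infer_instance
lemma slTwoRank_val (ℓ a b c : ℕ) :
    slTwoRank ℓ a b c = if cond3 ℓ a b c then 1 else 0 := by
  unfold slTwoRank cond3
  refine if_congr ?_ rfl rfl
  simp only [Nat.even_iff]
lemma slTwoRank_symm (ℓ c d μ : ℕ) : slTwoRank ℓ μ c d = slTwoRank ℓ c d μ := by
  rw [slTwoRank_val, slTwoRank_val]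
  refine if_congr ?_ rfl rfl
  unfold cond3
  omega

lemma key (ℓ A : ℕ) (f : ℕ → ℚ) : ∀ m : ℕ, A + 2 * m ≤ ℓ →
    ∑ μ ∈ range (ℓ + 1), (if A ≤ μ ∧ μ ≤ A + 2 * m ∧ 2 ∣ (μ - A) then f μ else 0)
      = ∑ j ∈ range (m + 1), f (A + 2 * j) := by
  intro m
  induction m with
  | zero =>
    intro h
    have e : ∀ μ : ℕ, (if A ≤ μ ∧ μ ≤ A + 2 * 0 ∧ 2 ∣ (μ - A) then f μ else 0)
        = if μ = A then f μ else 0 := by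
      intro μ; exact if_congr (by omega) rfl rfl
    simp only [e]
    rw [Finset.sum_ite_eq' (range (ℓ + 1)) A f, if_pos (by simp; omega)]
    simp
  | succ n ih =>
    intro h
    have e : ∀ μ ∈ range (ℓ + 1),
        (if A ≤ μ ∧ μ ≤ A + 2 * (n + 1) ∧ 2 ∣ (μ - A) then f μ else 0)
        = (if A ≤ μ ∧ μ ≤ A + 2 * n ∧ 2 ∣ (μ - A) then f μ else 0)
          + (if μ = A + 2 * (n + 1) then f μ else 0) := by
      intro μ _
      by_cases h1 : A ≤ μ ∧ μ ≤ A + 2 * n ∧ 2 ∣ (μ - A)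
      · rw [if_pos h1, if_pos (by omega : A ≤ μ ∧ μ ≤ A + 2 * (n+1) ∧ 2 ∣ (μ - A)),
          if_neg (by omega : ¬ μ = A + 2 * (n+1)), add_zero]
      · by_cases h2 : μ = A + 2 * (n + 1)
        · rw [if_pos (by omega : A ≤ μ ∧ μ ≤ A + 2 * (n+1) ∧ 2 ∣ (μ - A)), if_neg h1,
            if_pos h2, zero_add]
        · rw [if_neg (by omega : ¬(A ≤ μ ∧ μ ≤ A + 2 * (n+1) ∧ 2 ∣ (μ - A))), if_neg h1,
            if_neg h2, add_zero]
    rw [Finset.sum_congr rfl e, Finset.sum_add_distrib, ih (by omega),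
      Finset.sum_ite_eq' (range (ℓ + 1)) (A + 2 * (n + 1)) f,
      if_pos (by simp; omega)]
    rw [Finset.sum_range_succ _ (n + 1), Finset.sum_range_succ _ n]

lemma pair_sum (ℓ a b c d A m : ℕ) (f : ℕ → ℚ) (hm : A + 2 * m ≤ ℓ)
    (hiff : ∀ μ : ℕ, μ ≤ ℓ →
      ((cond3 ℓ a b μ ∧ cond3 ℓ c d μ) ↔ (A ≤ μ ∧ μ ≤ A + 2 * m ∧ 2 ∣ (μ - A)))) :
    ∑ μ ∈ range (ℓ + 1), f μ * ((slTwoRank ℓ a b μ * slTwoRank ℓ c d μ : ℕ) : ℚ)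
      = ∑ j ∈ range (m + 1), f (A + 2 * j) := by
  rw [← key ℓ A f m hm]
  refine Finset.sum_congr rfl ?_
  intro μ hμ
  have hμℓ : μ ≤ ℓ := by simp at hμ; omega
  rw [slTwoRank_val, slTwoRank_val]
  by_cases hJ : A ≤ μ ∧ μ ≤ A + 2 * m ∧ 2 ∣ (μ - A)
  · obtain ⟨h1, h2⟩ := (hiff μ hμℓ).2 hJ
    rw [if_pos h1, if_pos h2, if_pos hJ]
    norm_num
  · rw [if_neg hJ]
    have hn : ¬(cond3 ℓ a b μ ∧ cond3 ℓ c d μ) := fun hc => hJ ((hiff μ hμℓ).1 hc)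
    by_cases h1 : cond3 ℓ a b μ
    · rw [if_pos h1, if_neg (fun h2 => hn ⟨h1, h2⟩)]; norm_num
    · rw [if_neg h1]; norm_num

lemma pair_sum_zero (ℓ a b c d : ℕ) (f : ℕ → ℚ)
    (hiff : ∀ μ : ℕ, μ ≤ ℓ → ¬(cond3 ℓ a b μ ∧ cond3 ℓ c d μ)) :
    ∑ μ ∈ range (ℓ + 1), f μ * ((slTwoRank ℓ a b μ * slTwoRank ℓ c d μ : ℕ) : ℚ) = 0 := by
  refine Finset.sum_eq_zero ?_
  intro μ hμ
  have hμℓ : μ ≤ ℓ := by simp at hμ; omega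
  rw [slTwoRank_val, slTwoRank_val]
  by_cases h1 : cond3 ℓ a b μ
  · rw [if_pos h1, if_neg (fun h2 => hiff μ hμℓ ⟨h1, h2⟩)]; norm_num
  · rw [if_neg h1]; norm_num

lemma rank_sum (ℓ a b c d A m : ℕ) (hm : A + 2 * m ≤ ℓ)
    (hiff : ∀ μ : ℕ, μ ≤ ℓ →
      ((cond3 ℓ a b μ ∧ cond3 ℓ c d μ) ↔ (A ≤ μ ∧ μ ≤ A + 2 * m ∧ 2 ∣ (μ - A)))) :
    ((∑ μ ∈ range (ℓ + 1), slTwoRank ℓ a b μ * slTwoRank ℓ μ c d : ℕ) : ℚ) = (m : ℚ) + 1 := by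
  push_cast
  have e : ∀ μ ∈ range (ℓ + 1),
      ((slTwoRank ℓ a b μ : ℚ) * (slTwoRank ℓ μ c d : ℚ))
        = (fun _ => (1 : ℚ)) μ * ((slTwoRank ℓ a b μ * slTwoRank ℓ c d μ : ℕ) : ℚ) := by
    intro μ _
    rw [slTwoRank_symm ℓ c d μ]
    push_cast
    ring
  rw [Finset.sum_congr rfl e, pair_sum ℓ a b c d A m _ hm hiff]
  simp

lemma rank_sum_zero (ℓ a b c d : ℕ)
    (hiff : ∀ μ : ℕ, μ ≤ ℓ → ¬(cond3 ℓ a b μ ∧ cond3 ℓ c d μ)) :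
    ((∑ μ ∈ range (ℓ + 1), slTwoRank ℓ a b μ * slTwoRank ℓ μ c d : ℕ) : ℚ) = 0 := by
  push_cast
  have e : ∀ μ ∈ range (ℓ + 1),
      ((slTwoRank ℓ a b μ : ℚ) * (slTwoRank ℓ μ c d : ℚ))
        = (fun _ => (1 : ℚ)) μ * ((slTwoRank ℓ a b μ * slTwoRank ℓ c d μ : ℕ) : ℚ) := by
    intro μ _
    rw [slTwoRank_symm ℓ c d μ]
    push_cast
    ring
  rw [Finset.sum_congr rfl e, pair_sum_zero ℓ a b c d _ hiff]

def Scl (A m : ℕ) : ℚ :=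
  ((m : ℚ) + 1) * ((A : ℚ) ^ 2 / 2 + A) + (A : ℚ) * m * (m + 1)
    + (m : ℚ) * (m + 1) * (2 * m + 1) / 3 + (m : ℚ) * (m + 1)

lemma sum_cas (A : ℕ) : ∀ m : ℕ, ∑ j ∈ range (m + 1), casimir (A + 2 * j) = Scl A m := by
  intro m
  induction m with
  | zero => simp [Scl, casimir]
  | succ n ih =>
    rw [Finset.sum_range_succ _ (n + 1), ih]
    simp only [Scl, casimir]
    push_cast
    ring

lemma sum_split (ℓ l₁ l₂ l₃ l₄ : ℕ) :
    ∑ μ ∈ Finset.range (ℓ + 1), casimir μ *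
        ((slTwoRank ℓ l₁ l₂ μ * slTwoRank ℓ l₃ l₄ μ +
          slTwoRank ℓ l₁ l₃ μ * slTwoRank ℓ l₂ l₄ μ +
          slTwoRank ℓ l₁ l₄ μ * slTwoRank ℓ l₂ l₃ μ : ℕ) : ℚ)
    = (∑ μ ∈ range (ℓ + 1), casimir μ * ((slTwoRank ℓ l₁ l₂ μ * slTwoRank ℓ l₃ l₄ μ : ℕ) : ℚ))
      + (∑ μ ∈ range (ℓ + 1), casimir μ * ((slTwoRank ℓ l₁ l₃ μ * slTwoRank ℓ l₂ l₄ μ : ℕ) : ℚ))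
      + (∑ μ ∈ range (ℓ + 1), casimir μ * ((slTwoRank ℓ l₁ l₄ μ * slTwoRank ℓ l₂ l₃ μ : ℕ) : ℚ)) := by
  rw [← Finset.sum_add_distrib, ← Finset.sum_add_distrib]
  refine Finset.sum_congr rfl ?_
  intro μ _
  push_cast
  ring

lemma degDet_formula (ℓ l₁ l₂ l₃ l₄ A₁ A₂ A₃ m : ℕ)
    (hm1 : A₁ + 2 * m ≤ ℓ) (hm2 : A₂ + 2 * m ≤ ℓ) (hm3 : A₃ + 2 * m ≤ ℓ)
    (hi1 : ∀ μ : ℕ, μ ≤ ℓ →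
      ((cond3 ℓ l₁ l₂ μ ∧ cond3 ℓ l₃ l₄ μ) ↔ (A₁ ≤ μ ∧ μ ≤ A₁ + 2 * m ∧ 2 ∣ (μ - A₁))))
    (hi2 : ∀ μ : ℕ, μ ≤ ℓ →
      ((cond3 ℓ l₁ l₃ μ ∧ cond3 ℓ l₂ l₄ μ) ↔ (A₂ ≤ μ ∧ μ ≤ A₂ + 2 * m ∧ 2 ∣ (μ - A₂))))
    (hi3 : ∀ μ : ℕ, μ ≤ ℓ →
      ((cond3 ℓ l₁ l₄ μ ∧ cond3 ℓ l₂ l₃ μ) ↔ (A₃ ≤ μ ∧ μ ≤ A₃ + 2 * m ∧ 2 ∣ (μ - A₃)))) :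
    degDet ℓ l₁ l₂ l₃ l₄ = (1 / (2 * ((ℓ : ℚ) + 2))) *
      (((m : ℚ) + 1) * (casimir l₁ + casimir l₂ + casimir l₃ + casimir l₄)
        - (Scl A₁ m + Scl A₂ m + Scl A₃ m)) := by
  unfold degDet
  rw [sum_split, rank_sum ℓ l₁ l₂ l₃ l₄ A₁ m hm1 hi1,
    pair_sum ℓ l₁ l₂ l₃ l₄ A₁ m casimir hm1 hi1,
    pair_sum ℓ l₁ l₃ l₂ l₄ A₂ m casimir hm2 hi2,
    pair_sum ℓ l₁ l₄ l₂ l₃ A₃ m casimir hm3 hi3,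
    sum_cas A₁ m, sum_cas A₂ m, sum_cas A₃ m]

lemma degDet_zero (ℓ l₁ l₂ l₃ l₄ : ℕ)
    (hi1 : ∀ μ : ℕ, μ ≤ ℓ → ¬(cond3 ℓ l₁ l₂ μ ∧ cond3 ℓ l₃ l₄ μ))
    (hi2 : ∀ μ : ℕ, μ ≤ ℓ → ¬(cond3 ℓ l₁ l₃ μ ∧ cond3 ℓ l₂ l₄ μ))
    (hi3 : ∀ μ : ℕ, μ ≤ ℓ → ¬(cond3 ℓ l₁ l₄ μ ∧ cond3 ℓ l₂ l₃ μ)) :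
    degDet ℓ l₁ l₂ l₃ l₄ = 0 := by
  unfold degDet
  rw [sum_split, rank_sum_zero ℓ l₁ l₂ l₃ l₄ hi1,
    pair_sum_zero ℓ l₁ l₂ l₃ l₄ casimir hi1,
    pair_sum_zero ℓ l₁ l₃ l₂ l₄ casimir hi2,
    pair_sum_zero ℓ l₁ l₄ l₂ l₃ casimir hi3]
  ring

set_option maxHeartbeats 1000000 in
theorem stmt_9 (l₁ l₂ l₃ l₄ ℓ : ℕ)
    (h12 : l₁ ≤ l₂) (h23 : l₂ ≤ l₃) (h34 : l₃ ≤ l₄)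
    (hev : Even (l₁ + l₂ + l₃ + l₄)) (h4 : l₄ ≤ ℓ) :
    (l₂ + l₃ ≤ l₁ + l₄ →
      degDet ℓ l₁ l₂ l₃ l₄ =
        max 0 (((ℓ : ℚ) + 1 - (l₄ : ℚ)) *
          (((l₁ : ℚ) + l₂ + l₃ + l₄) / 2 - (ℓ : ℚ)))) ∧
    (l₁ + l₄ ≤ l₂ + l₃ →
      degDet ℓ l₁ l₂ l₃ l₄ =
        max 0 (((ℓ : ℚ) + 1 + (l₁ : ℚ) - ((l₁ : ℚ) + l₂ + l₃ + l₄) / 2) *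
          (((l₁ : ℚ) + l₂ + l₃ + l₄) / 2 - (ℓ : ℚ)))) := by
  rw [Nat.even_iff] at hev
  have h24 : l₂ ≤ l₄ := h23.trans h34
  have h14 : l₁ ≤ l₄ := h12.trans h24
  have hq1 : (l₁ : ℚ) ≤ l₂ := by exact_mod_cast h12
  have hq2 : (l₂ : ℚ) ≤ l₃ := by exact_mod_cast h23
  have hq3 : (l₃ : ℚ) ≤ l₄ := by exact_mod_cast h34
  have hq4 : (l₄ : ℚ) ≤ ℓ := by exact_mod_cast h4
  have hl2 : 2 * ((ℓ : ℚ) + 2) ≠ 0 := by positivity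
  constructor
  · intro hA
    have hqA : (l₂ : ℚ) + l₃ ≤ (l₁ : ℚ) + l₄ := by exact_mod_cast hA
    by_cases hs : 2 * ℓ ≤ l₁ + l₂ + l₃ + l₄
    · -- Case I.A
      have hqs : 2 * (ℓ : ℚ) ≤ (l₁ : ℚ) + l₂ + l₃ + l₄ := by exact_mod_cast hs
      rw [degDet_formula ℓ l₁ l₂ l₃ l₄ (l₄ - l₃) (l₄ - l₂) (l₄ - l₁) (ℓ - l₄)
          (by omega) (by omega) (by omega)
          (fun μ hμ => by simp only [cond3]; omega)
          (fun μ hμ => by simp only [cond3]; omega)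
          (fun μ hμ => by simp only [cond3]; omega),
        max_eq_right (by nlinarith)]
      simp only [Scl, casimir]
      rw [Nat.cast_sub h34, Nat.cast_sub h24, Nat.cast_sub h14, Nat.cast_sub h4]
      rw [one_div, inv_mul_eq_div, div_eq_iff hl2]
      ring
    · by_cases hne : l₄ ≤ l₁ + l₂ + l₃
      · -- Case II.A
        have hqs : (l₁ : ℚ) + l₂ + l₃ + l₄ ≤ 2 * (ℓ : ℚ) := by
          have : l₁ + l₂ + l₃ + l₄ ≤ 2 * ℓ := by omega
          exact_mod_cast this
        obtain ⟨m, hm⟩ : ∃ m, 2 * m + 2 * l₄ = l₁ + l₂ + l₃ + l₄ :=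
          ⟨(l₁ + l₂ + l₃ - l₄) / 2, by omega⟩
        have hmQ : ((m : ℕ) : ℚ)
            = ((l₁ : ℚ) + l₂ + l₃ + l₄) / 2 - l₄ := by
          have := congrArg (Nat.cast : ℕ → ℚ) hm
          push_cast at this
          linarith
        rw [degDet_formula ℓ l₁ l₂ l₃ l₄ (l₄ - l₃) (l₄ - l₂) (l₄ - l₁)
            m
            (by omega) (by omega) (by omega)
            (fun μ hμ => by simp only [cond3]; omega)
            (fun μ hμ => by simp only [cond3]; omega)
            (fun μ hμ => by simp only [cond3]; omega),
          max_eq_left (by nlinarith)]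
        simp only [Scl, casimir]
        rw [Nat.cast_sub h34, Nat.cast_sub h24, Nat.cast_sub h14, hmQ]
        rw [one_div, inv_mul_eq_div, div_eq_iff hl2]
        ring
      · -- Case II.A empty
        have hqs : (l₁ : ℚ) + l₂ + l₃ + l₄ ≤ 2 * (ℓ : ℚ) := by
          have : l₁ + l₂ + l₃ + l₄ ≤ 2 * ℓ := by omega
          exact_mod_cast this
        rw [degDet_zero ℓ l₁ l₂ l₃ l₄
            (fun μ hμ => by simp only [cond3]; omega)
            (fun μ hμ => by simp only [cond3]; omega)
            (fun μ hμ => by simp only [cond3]; omega),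
          max_eq_left (by nlinarith)]
  · intro hB
    have hqB : (l₁ : ℚ) + l₄ ≤ (l₂ : ℚ) + l₃ := by exact_mod_cast hB
    by_cases hs : 2 * ℓ ≤ l₁ + l₂ + l₃ + l₄
    · have hqs : 2 * (ℓ : ℚ) ≤ (l₁ : ℚ) + l₂ + l₃ + l₄ := by exact_mod_cast hs
      by_cases hne : l₁ + l₂ + l₃ + l₄ ≤ 2 * ℓ + 2 * l₁
      · -- Case I.B
        have hqne : (l₁ : ℚ) + l₂ + l₃ + l₄ ≤ 2 * ℓ + 2 * l₁ := by exact_mod_cast hne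
        obtain ⟨m, hm⟩ : ∃ m, 2 * m + (l₁ + l₂ + l₃ + l₄) = 2 * ℓ + 2 * l₁ :=
          ⟨ℓ + l₁ - (l₁ + l₂ + l₃ + l₄) / 2, by omega⟩
        have hmQ : ((m : ℕ) : ℚ)
            = (ℓ : ℚ) + l₁ - ((l₁ : ℚ) + l₂ + l₃ + l₄) / 2 := by
          have := congrArg (Nat.cast : ℕ → ℚ) hm
          push_cast at this
          linarith
        rw [degDet_formula ℓ l₁ l₂ l₃ l₄ (l₂ - l₁) (l₃ - l₁) (l₄ - l₁)
            m
            (by omega) (by omega) (by omega)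
            (fun μ hμ => by simp only [cond3]; omega)
            (fun μ hμ => by simp only [cond3]; omega)
            (fun μ hμ => by simp only [cond3]; omega),
          max_eq_right (by nlinarith)]
        simp only [Scl, casimir]
        rw [Nat.cast_sub h12, Nat.cast_sub (h12.trans h23), Nat.cast_sub h14, hmQ]
        rw [one_div, inv_mul_eq_div, div_eq_iff hl2]
        ring
      · -- Case I.B empty
        have hqne : 2 * (ℓ : ℚ) + 2 * l₁ + 2 ≤ (l₁ : ℚ) + l₂ + l₃ + l₄ := by
          have : 2 * ℓ + 2 * l₁ + 2 ≤ l₁ + l₂ + l₃ + l₄ := by omega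
          exact_mod_cast this
        rw [degDet_zero ℓ l₁ l₂ l₃ l₄
            (fun μ hμ => by simp only [cond3]; omega)
            (fun μ hμ => by simp only [cond3]; omega)
            (fun μ hμ => by simp only [cond3]; omega),
          max_eq_left (by nlinarith)]
    · -- Case II.B
      have hqs : (l₁ : ℚ) + l₂ + l₃ + l₄ ≤ 2 * (ℓ : ℚ) := by
        have : l₁ + l₂ + l₃ + l₄ ≤ 2 * ℓ := by omega
        exact_mod_cast this
      rw [degDet_formula ℓ l₁ l₂ l₃ l₄ (l₂ - l₁) (l₃ - l₁) (l₄ - l₁) l₁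
          (by omega) (by omega) (by omega)
          (fun μ hμ => by simp only [cond3]; omega)
          (fun μ hμ => by simp only [cond3]; omega)
          (fun μ hμ => by simp only [cond3]; omega),
        max_eq_left (by nlinarith)]
      simp only [Scl, casimir]
      rw [Nat.cast_sub h12, Nat.cast_sub (h12.trans h23), Nat.cast_sub h14]
      rw [one_div, inv_mul_eq_div, div_eq_iff hl2]
      ring
end
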